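/- Let C = v_1 → ... → v_k → v_1 be a cycle in the overlap graph, with length |C| = Σ_i |pref(v_i, v_{i+1 mod k})|, and let v = v_1. Then v is a prefix of w^∞ where w = pref(v_1,v_2)·pref(v_2,v_3)···pref(v_k,v_1), and consequently for any symbol p and positions l ≤ r ≤ |v| with r - l < |C|, the number of occurrences of p in v[l..r] is at most |C|_p := Σ_i |pref(v_i, v_{i+1 mod k})|_p. -/

import Mathlib

/-- The length of the overlap of `s` and `t`: the longest `y` such that
`s = x ++ y` and `t = y ++ z` with `x, z` non-empty. -/
def ovLen {α : Type*} [DecidableEq α] (s t : List α) : ℕ :=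
  Nat.findGreatest
    (fun k => k < s.length ∧ k < t.length ∧ s.drop (s.length - k) = t.take k)
    (min s.length t.length)

/-- The overlap of `s` and `t`. -/
def ov {α : Type*} [DecidableEq α] (s t : List α) : List α :=
  t.take (ovLen s t)

/-- The prefix part of `s` with respect to `t`: `s = pre s t ++ ov s t`. -/
def pre {α : Type*} [DecidableEq α] (s t : List α) : List α :=
  s.take (s.length - ovLen s t)

/-- The suffix part of `t` with respect to `s`: `t = ov s t ++ suf s t`. -/
def suf {α : Type*} [DecidableEq α] (s t : List α) : List α :=
  t.drop (ovLen s t)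

/-- A string is a prefix of the infinite periodic string `w^∞` iff it is a
prefix of `w^N` for some `N`. -/
def IsPrefixOfPower {α : Type*} (w s : List α) : Prop :=
  ∃ N : ℕ, s <+: (List.replicate N w).flatten

/-- The (1-indexed) substring `s[l..r]` of `s`. -/
def substr {α : Type*} (s : List α) (l r : ℕ) : List α :=
  (s.drop (l - 1)).take (r - l + 1)

section Aux
variable {α : Type*} [DecidableEq α]
set_option linter.unusedSectionVars false

lemma ovLen_spec' (s t : List α) (hs : s ≠ []) :
    ovLen s t < s.length ∧ s.drop (s.length - ovLen s t) = t.take (ovLen s t) := by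
  rcases eq_or_ne (ovLen s t) 0 with h | h
  · rw [h]
    simp [List.length_pos_iff_ne_nil.2 hs]
  · have := ((Nat.findGreatest_eq_iff (m := ovLen s t)).1 rfl).2.1 h
    exact ⟨this.1, this.2.2⟩

lemma pre_append_ov (s t : List α) (hs : s ≠ []) : pre s t ++ ov s t = s := by
  rw [pre, ov, ← (ovLen_spec' s t hs).2, List.take_append_drop]

lemma prefix_pre_append (s t : List α) (hs : s ≠ []) : s <+: pre s t ++ t := by
  conv_lhs => rw [← pre_append_ov s t hs]
  obtain ⟨c, hc⟩ := List.take_prefix (ovLen s t) t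
  exact ⟨c, by rw [List.append_assoc, ov, hc]⟩

lemma pre_ne_nil (s t : List α) (hs : s ≠ []) : pre s t ≠ [] := by
  have h := (ovLen_spec' s t hs).1
  simp only [pre, ne_eq, List.take_eq_nil_iff, hs, or_false]
  omega

lemma prefix_trans_append {s t X Y : List α} (h1 : s <+: X ++ t)
    (h2 : t <+: Y) : s <+: X ++ Y := by
  refine h1.trans ?_
  obtain ⟨c, rfl⟩ := h2
  exact ⟨c, by rw [List.append_assoc]⟩

lemma prefix_of_prefix_append {s t X : List α} (h : s <+: X ++ t)
    (hl : s.length ≤ X.length) : s <+: X := by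
  have := List.prefix_take_iff.2 ⟨h, le_refl _⟩
  rw [List.take_append_of_le_length hl] at this
  exact this.trans (List.take_prefix _ _)

open Fin.NatCast in
lemma chain_prefix (k : ℕ) [NeZero k] (v : Fin k → List α) (hne : ∀ i, v i ≠ []) :
    ∀ j : ℕ, v 0 <+:
      (List.ofFn (fun i : Fin j =>
        pre (v ((i : ℕ) : Fin k)) (v (((i : ℕ) : Fin k) + 1)))).flatten ++ v ((j : ℕ) : Fin k)
  | 0 => by simp
  | (j+1) => by
    have IH := chain_prefix k v hne j
    have step := prefix_pre_append (v ((j : ℕ) : Fin k)) (v (((j : ℕ) : Fin k) + 1))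
      (hne _)
    have := prefix_trans_append IH step
    rw [← List.append_assoc] at this
    have h1 : (((j + 1 : ℕ)) : Fin k) = ((j : ℕ) : Fin k) + 1 := by push_cast; ring
    have heq : (List.ofFn (fun i : Fin (j + 1) =>
        pre (v ((i : ℕ) : Fin k)) (v (((i : ℕ) : Fin k) + 1)))).flatten
          ++ v (((j + 1 : ℕ)) : Fin k)
        = ((List.ofFn (fun i : Fin j =>
            pre (v ((i : ℕ) : Fin k)) (v (((i : ℕ) : Fin k) + 1)))).flatten
          ++ pre (v ((j : ℕ) : Fin k)) (v (((j : ℕ) : Fin k) + 1)))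
          ++ v (((j : ℕ) : Fin k) + 1) := by
      rw [List.ofFn_succ', h1]
      simp [List.concat_eq_append]
    rw [heq]
    exact this

lemma prefix_pow {s w : List α} (h : s <+: w ++ s) :
    ∀ N, s <+: (List.replicate N w).flatten ++ s
  | 0 => by simp
  | (N+1) => by
    have IH := prefix_pow h N
    have := prefix_trans_append (t := s) (X := w) h IH
    rw [← List.append_assoc] at this
    simpa [List.replicate_succ] using this

lemma length_flatten_replicate (w : List α) (N : ℕ) :
    ((List.replicate N w).flatten).length = N * w.length := by
  simp [List.length_flatten, List.map_replicate, List.sum_replicate, smul_eq_mul]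

lemma prefix_flatten_replicate {s w : List α} (h : s <+: w ++ s)
    (N : ℕ) (hN : s.length ≤ N * w.length) : s <+: (List.replicate N w).flatten := by
  refine prefix_of_prefix_append (prefix_pow h N) ?_
  rw [length_flatten_replicate]; exact hN

lemma drop_flatten_replicate (w : List α) :
    ∀ a N, a ≤ N → ((List.replicate N w).flatten).drop (a * w.length)
      = (List.replicate (N - a) w).flatten
  | 0, N, _ => by simp
  | (a+1), 0, h => by omega
  | (a+1), (N+1), h => by
    rw [List.replicate_succ, List.flatten_cons, Nat.succ_mul, Nat.add_comm,
      ← List.drop_drop, List.drop_left]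
    rw [drop_flatten_replicate w a N (by omega)]
    congr 2
    omega

lemma count_window (w : List α) (hw : w ≠ []) (N q L : ℕ) (hL : L ≤ w.length)
    (hN : q / w.length + 2 ≤ N) (p : α) :
    ((((List.replicate N w).flatten).drop q).take L).count p ≤ w.count p := by
  set m := q % w.length with hm
  set a := q / w.length with ha
  have hwpos : 0 < w.length := List.length_pos_iff.2 hw
  have hq : q = a * w.length + m := by
    rw [ha, hm, Nat.mul_comm]
    exact (Nat.div_add_mod q w.length).symm
  have hmlt : m < w.length := Nat.mod_lt _ hwpos
  have hdrop : ((List.replicate N w).flatten).drop q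
      = ((List.replicate (N - a) w).flatten).drop m := by
    rw [hq, ← List.drop_drop, drop_flatten_replicate w a N (by omega)]
  obtain ⟨M, hM⟩ : ∃ M, N - a = M + 2 := ⟨N - a - 2, by omega⟩
  rw [hdrop, hM, List.replicate_succ, List.replicate_succ, List.flatten_cons,
    List.flatten_cons]
  rw [List.drop_append_of_le_length hmlt.le]
  -- now : w.drop m ++ (w ++ rest)
  have hsplit : w.drop m ++ (w ++ (List.replicate M w).flatten)
      = (w.drop m ++ w.take m) ++ (w.drop m ++ (List.replicate M w).flatten) := by
    symm
    rw [List.append_assoc, ← List.append_assoc (w.take m), List.take_append_drop]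
  rw [hsplit, List.take_append_of_le_length
    (by rw [List.length_append, List.length_drop, List.length_take]; omega)]
  calc ((w.drop m ++ w.take m).take L).count p
      ≤ (w.drop m ++ w.take m).count p := (List.take_sublist _ _).count_le p
    _ = w.count p := by
        rw [List.count_append]
        conv_rhs => rw [← List.take_append_drop m w, List.count_append]
        omega

end Aux

/-- For a cycle `v_1 → ... → v_k → v_1` in the overlap graph, `v_1` is a
prefix of `w^∞` with `w = pref(v_1,v_2)···pref(v_k,v_1)`, and any window of
`v_1` shorter than `|C|` has at most `|C|_p` occurrences of any symbol `p`. -/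
theorem stmt_6 {α : Type*} [DecidableEq α] (k : ℕ) [NeZero k]
    (v : Fin k → List α)
    (hne : ∀ i, v i ≠ ([] : List α))
    (hnosub : ∀ i j, v i ≠ v j → ¬ v i <:+: v j) :
    ∀ w : List α, w = (List.ofFn (fun i : Fin k => pre (v i) (v (i + 1)))).flatten →
    IsPrefixOfPower w (v 0) ∧
    ∀ (p : α) (l r : ℕ), 1 ≤ l → l ≤ r → r ≤ (v 0).length →
      r - l < w.length →
      (substr (v 0) l r).count p ≤
        ∑ i : Fin k, (pre (v i) (v (i + 1))).count p := by
  intro w hw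
  -- identify w with the chain flatten
  open Fin.NatCast in
  have hwid : (List.ofFn (fun i : Fin k =>
      pre (v ((i : ℕ) : Fin k)) (v (((i : ℕ) : Fin k) + 1)))).flatten = w := by
    rw [hw]
    congr 1
    ext i : 1
    simp [Fin.cast_val_eq_self]
  have hcyc : v 0 <+: w ++ v 0 := by
    have := chain_prefix k v hne k
    rw [hwid, Fin.natCast_self] at this
    exact this
  have hwne : w ≠ [] := by
    intro h
    rw [hw] at h
    have hmem : pre (v 0) (v 1) ∈ List.ofFn (fun i : Fin k => pre (v i) (v (i + 1))) := by
      rw [List.mem_ofFn]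
      exact ⟨0, by norm_num⟩
    exact pre_ne_nil (v 0) (v 1) (hne 0) (List.flatten_eq_nil_iff.1 h _ hmem)
  have hwpos : 0 < w.length := List.length_pos_iff.2 hwne
  have hcount : ∀ p : α, w.count p = ∑ i : Fin k, (pre (v i) (v (i + 1))).count p := by
    intro p
    rw [hw, List.count_flatten, List.map_ofFn, List.sum_ofFn]
    rfl
  constructor
  · exact ⟨(v 0).length, prefix_flatten_replicate hcyc _ (by nlinarith)⟩
  · intro p l r hl hlr hrlen hwin
    set q := l - 1 with hq
    set L := r - l + 1 with hL
    set N := q + (v 0).length + 2 with hN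
    have hpref : v 0 <+: (List.replicate N w).flatten :=
      prefix_flatten_replicate hcyc N (by nlinarith)
    obtain ⟨c, hc⟩ := hpref
    have hsub : substr (v 0) l r = (((List.replicate N w).flatten).drop q).take L := by
      rw [substr, ← hc, List.drop_append,
        Nat.sub_eq_zero_of_le (by omega : q ≤ (v 0).length), List.drop_zero,
        List.take_append_of_le_length (by rw [List.length_drop]; omega)]
    rw [hsub, ← hcount p]
    exact count_window w hwne N q L (by omega) (by have := Nat.div_le_self q w.length; omega) p
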